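/- Let d ≥ 2 and let x, y, ξ be vectors in EuclideanSpace ℝ (Fin d) with ‖x‖ = ‖y‖ = ‖ξ‖ = 1, ⟨x, ξ⟩ = 0, and x ≠ y. Define f : ℝ → ℝ by f(t) = ‖(cos t) • x + (sin t) • ξ − y‖, and set L = ‖x − y‖. Then the second derivative of f at t = 0 equals (⟨x, y⟩ − ⟨ξ, y⟩²/L²)/L, which can be rewritten as (1 − ⟨ξ, y⟩²/L²)/L − L/2. -/

import Mathlib

open scoped RealInnerProductSpace

/-- Hessian of the distance to `y` on the unit sphere, computed as the second
derivative along a unit-speed great circle through `x` with velocity `ξ`. -/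
theorem stmt_6 (d : ℕ) (hd : 2 ≤ d)
    (x y ξ : EuclideanSpace ℝ (Fin d))
    (hx : ‖x‖ = 1) (hy : ‖y‖ = 1) (hξ : ‖ξ‖ = 1)
    (hxξ : ⟪x, ξ⟫ = 0) (hxy : x ≠ y)
    (f : ℝ → ℝ)
    (hf : ∀ t, f t = ‖(Real.cos t) • x + (Real.sin t) • ξ - y‖)
    (L : ℝ) (hL : L = ‖x - y‖) :
    iteratedDeriv 2 f 0 = (⟪x, y⟫ - ⟪ξ, y⟫ ^ 2 / L ^ 2) / L ∧
    (⟪x, y⟫ - ⟪ξ, y⟫ ^ 2 / L ^ 2) / L = (1 - ⟪ξ, y⟫ ^ 2 / L ^ 2) / L - L / 2 := by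
  set a : ℝ := ⟪x, y⟫ with ha
  set b : ℝ := ⟪ξ, y⟫ with hb
  have hL0 : 0 < L := by rw [hL]; exact norm_sub_pos_iff.mpr hxy
  have hL2 : L ^ 2 = 2 - 2 * a := by
    rw [hL, norm_sub_sq_real, hx, hy, ← ha]
    ring
  set g : ℝ → ℝ := fun t => 2 - 2 * a * Real.cos t - 2 * b * Real.sin t with hg
  have hfg : ∀ t, f t = Real.sqrt (g t) := by
    intro t
    rw [hf t, ← Real.sqrt_sq (norm_nonneg _)]
    congr 1
    rw [norm_sub_sq_real, norm_add_sq_real, norm_smul, norm_smul,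
      real_inner_smul_left, real_inner_smul_right, inner_add_left,
      real_inner_smul_left, real_inner_smul_left, hx, hξ, hxξ, hy, ← ha, ← hb]
    simp only [hg, mul_one, mul_zero, one_pow, Real.norm_eq_abs, sq_abs]
    linear_combination Real.sin_sq_add_cos_sq t
  have hg0 : g 0 = L ^ 2 := by simp [hg, hL2]
  have hgd : ∀ t, HasDerivAt g (2 * a * Real.sin t - 2 * b * Real.cos t) t := by
    intro t
    have h1 := (Real.hasDerivAt_cos t).const_mul (2 * a)
    have h2 := (Real.hasDerivAt_sin t).const_mul (2 * b)
    have := ((hasDerivAt_const t (2:ℝ)).sub h1).sub h2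
    convert this using 1
    all_goals first | rfl | ring
  have hgpos : ∀ᶠ t in nhds (0:ℝ), 0 < g t := by
    have hc : ContinuousAt g 0 := ((continuous_const.sub
      (continuous_const.mul Real.continuous_cos)).sub
      (continuous_const.mul Real.continuous_sin)).continuousAt
    have : (0:ℝ) < g 0 := by rw [hg0]; positivity
    exact hc.eventually (eventually_gt_nhds this)
  have hfd : ∀ t, 0 < g t →
      HasDerivAt f ((2 * a * Real.sin t - 2 * b * Real.cos t) / (2 * Real.sqrt (g t))) t := by
    intro t ht
    have h := (Real.hasDerivAt_sqrt (ne_of_gt ht)).comp t (hgd t)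
    have hfeq : f = fun s => Real.sqrt (g s) := funext hfg
    rw [hfeq]
    convert h using 1
    all_goals first | rfl | ring
  have hf' : deriv f =ᶠ[nhds (0:ℝ)]
      fun t => (2 * a * Real.sin t - 2 * b * Real.cos t) / (2 * Real.sqrt (g t)) :=
    hgpos.mono fun t ht => (hfd t ht).deriv
  have hsq0 : Real.sqrt (g 0) = L := by
    rw [hg0, Real.sqrt_sq hL0.le]
  -- derivative of the explicit formula at 0
  have hN : HasDerivAt (fun t => 2 * a * Real.sin t - 2 * b * Real.cos t) (2 * a) 0 := by
    have h1 := (Real.hasDerivAt_sin 0).const_mul (2 * a)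
    have h2 := (Real.hasDerivAt_cos 0).const_mul (2 * b)
    have := h1.sub h2
    convert this using 1
    all_goals first | rfl | simp
  have hD : HasDerivAt (fun t => 2 * Real.sqrt (g t)) (-2 * b / L) 0 := by
    have h := ((Real.hasDerivAt_sqrt (x := g 0) (by rw [hg0]; positivity)).comp 0 (hgd 0)).const_mul 2
    convert h using 1
    all_goals try rfl
    rw [hsq0, Real.sin_zero, Real.cos_zero]
    field_simp
    ring
  have hD0 : (2 : ℝ) * Real.sqrt (g 0) ≠ 0 := by rw [hsq0]; positivity
  have hh := hN.div hD hD0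
  have key : deriv (deriv f) 0 = (a - b ^ 2 / L ^ 2) / L := by
    rw [Filter.EventuallyEq.deriv_eq hf', (show HasDerivAt (fun t => (2 * a * Real.sin t - 2 * b * Real.cos t) / (2 * Real.sqrt (g t))) _ 0 from hh).deriv, hsq0, Real.sin_zero, Real.cos_zero]
    field_simp
    ring
  constructor
  · rw [iteratedDeriv_succ, iteratedDeriv_one]
    exact key
  · have haL : a = 1 - L ^ 2 / 2 := by linarith
    rw [haL]
    field_simp
    ring
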